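/- Suppose that for each m = 1,…,M the Q×Q submatrix of A formed by its columns (m−1)Q+1,…,mQ is invertible. Then the set of matrices X₀ ∈ ℂ^{M×MQ} for which C_R is singular (where the first MQ columns of X are taken to be X₀) has Lebesgue measure zero; in particular, for almost every X₀ the matrix C_R is invertible, and hence R(X) has rank MQ, i.e., the row space of R(X) has dimension MQ. -/

import Mathlib

open Matrix

noncomputable section

/-- The column index `(m-1)Q + q` (0-indexed: `m*Q + q`) among the first `MQ`
columns, as an index into `Fin T`. -/
def emb (M Q T : ℕ) (h : M * Q ≤ T) (p : Fin M × Fin Q) : Fin T :=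
  ⟨p.1.1 * Q + p.2.1, by
    have hm := p.1.2
    have hq := p.2.2
    have h1 : p.1.1 * Q + p.2.1 < (p.1.1 + 1) * Q := by
      have : (p.1.1 + 1) * Q = p.1.1 * Q + Q := by ring
      omega
    have h2 : (p.1.1 + 1) * Q ≤ M * Q := Nat.mul_le_mul_right Q hm
    omega⟩

/-- The column index `MQ + j` (0-indexed) as an index into `Fin T`, assuming
`M(Q+1) ≤ T`. -/
def tcol (M Q T : ℕ) (h : M * (Q + 1) ≤ T) (j : Fin M) : Fin T :=
  ⟨M * Q + j.1, by
    have hj := j.2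
    have : M * (Q + 1) = M * Q + M := by ring
    omega⟩

/-- `R(X) ∈ ℂ^{MQ×T}`: the block matrix whose `m`-th block of `Q` rows is
`A·diag(x_m)`; rows are indexed by pairs `(m, q)`. -/
def Rmat (M Q T : ℕ) (A : Matrix (Fin Q) (Fin T) ℂ) (X : Matrix (Fin M) (Fin T) ℂ) :
    Matrix (Fin M × Fin Q) (Fin T) ℂ :=
  Matrix.of fun p t => A p.2 t * X p.1 t

/-- `C_R(X) ∈ ℂ^{MQ×MQ}`: the submatrix of the first `MQ` columns of `R(X)`. -/
def CR (M Q T : ℕ) (h : M * Q ≤ T) (A : Matrix (Fin Q) (Fin T) ℂ)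
    (X : Matrix (Fin M) (Fin T) ℂ) : Matrix (Fin M × Fin Q) (Fin M × Fin Q) ℂ :=
  Matrix.of fun p p' => Rmat M Q T A X p (emb M Q T h p')

/-- `B = C_R⁻¹·R ∈ ℂ^{MQ×T}`, the reduced row echelon form representative. -/
def Bmat (M Q T : ℕ) (h : M * Q ≤ T) (A : Matrix (Fin Q) (Fin T) ℂ)
    (X : Matrix (Fin M) (Fin T) ℂ) : Matrix (Fin M × Fin Q) (Fin T) ℂ :=
  (CR M Q T h A X)⁻¹ * Rmat M Q T A X

/-- `J(X) ∈ ℂ^{MQ×MQ}`: the block matrix whose `j`-th block of `Q` rows is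
`A[:,1:MQ]·diag(B(MQ+j))`. -/
def Jmat (M Q T : ℕ) (h : M * (Q + 1) ≤ T) (A : Matrix (Fin Q) (Fin T) ℂ)
    (X : Matrix (Fin M) (Fin T) ℂ) : Matrix (Fin M × Fin Q) (Fin M × Fin Q) ℂ :=
  Matrix.of fun p p' =>
    A p.2 (emb M Q T (le_trans (Nat.mul_le_mul_left M (Nat.le_succ Q)) h) p')
      * Bmat M Q T (le_trans (Nat.mul_le_mul_left M (Nat.le_succ Q)) h) A X p'
          (tcol M Q T h p.1)

open MeasureTheory

open MeasureTheory MvPolynomial in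
private theorem nullA : ∀ (n : ℕ) (p : MvPolynomial (Fin n) ℂ), p ≠ 0 →
    volume {x : Fin n → ℂ | eval x p = 0} = 0 := by
  intro n
  induction n with
  | zero =>
    intro p hp
    obtain ⟨a, rfl⟩ := MvPolynomial.C_surjective (Fin 0) p
    have ha : a ≠ 0 := fun h => hp (by simp [h])
    convert measure_empty (μ := (volume : Measure (Fin 0 → ℂ)))
    ext x
    simp [ha]
  | succ n ih =>
    intro p hp
    set q : Polynomial (MvPolynomial (Fin n) ℂ) := finSuccEquiv ℂ n p with hq
    have hq0 : q ≠ 0 := by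
      simp only [hq, ne_eq, EmbeddingLike.map_eq_zero_iff]; exact hp
    have hlead : q.coeff q.natDegree ≠ 0 := Polynomial.leadingCoeff_ne_zero.mpr hq0
    have hmeas : MeasurableSet {y : Fin (n+1) → ℂ | eval y p = 0} :=
      (MvPolynomial.continuous_eval p).measurable (measurableSet_singleton 0)
    have h1 : MeasurePreserving
        (MeasurableEquiv.piFinSuccAbove (fun _ : Fin (n+1) => ℂ) 0).symm
        (volume.prod volume) volume :=
      (volume_preserving_piFinSuccAbove (fun _ : Fin (n+1) => ℂ) 0).symm
    have h2 : MeasurePreserving (Prod.swap : (Fin n → ℂ) × ℂ → ℂ × (Fin n → ℂ))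
        (volume.prod volume) (volume.prod volume) := Measure.measurePreserving_swap
    have hcomp := (h1.comp h2)
    rw [← hcomp.measure_preimage hmeas.nullMeasurableSet]
    have hset : (Prod.swap ⁻¹'
        ((MeasurableEquiv.piFinSuccAbove (fun _ : Fin (n+1) => ℂ) 0).symm ⁻¹'
          {y : Fin (n+1) → ℂ | eval y p = 0}))
        = {z : (Fin n → ℂ) × ℂ |
            Polynomial.eval z.2 (Polynomial.map (eval z.1) q) = 0} := by
      ext ⟨xs, x⟩
      have : (MeasurableEquiv.piFinSuccAbove (fun _ : Fin (n+1) => ℂ) 0).symm (x, xs)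
          = Fin.cons x xs := by
        simp [MeasurableEquiv.piFinSuccAbove, Fin.insertNthEquiv, Fin.insertNth_zero]
      simp only [Set.mem_preimage, Prod.swap_prod_mk, this, Set.mem_setOf_eq]
      rw [hq, ← MvPolynomial.eval_eq_eval_mv_eval']
    rw [Set.preimage_comp, hset]
    have hsetmeas : MeasurableSet {z : (Fin n → ℂ) × ℂ |
        Polynomial.eval z.2 (Polynomial.map (eval z.1) q) = 0} := by
      rw [← hset]
      exact (MeasurableEquiv.measurable _ |>.comp measurable_swap) hmeas
    rw [MeasureTheory.Measure.measure_prod_null hsetmeas]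
    have hgood := ih (q.coeff q.natDegree) hlead
    filter_upwards [(measure_eq_zero_iff_ae_notMem (μ := volume)).mp hgood] with xs hxs
    have hmap : Polynomial.map (eval xs) q ≠ 0 := by
      intro hcontra
      apply hxs
      show eval xs (q.coeff q.natDegree) = 0
      have := congrArg (fun r => Polynomial.coeff r q.natDegree) hcontra
      simpa [Polynomial.coeff_map] using this
    have : (Prod.mk xs ⁻¹' {z : (Fin n → ℂ) × ℂ |
        Polynomial.eval z.2 (Polynomial.map (eval xs) q) = 0})
        ⊆ {x : ℂ | Polynomial.eval x (Polynomial.map (eval xs) q) = 0} := by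
      intro x hx; exact hx
    refine measure_mono_null (fun x hx => hx) ?_
    exact Set.Finite.measure_zero (Polynomial.finite_setOf_isRoot hmap) _

open MeasureTheory MvPolynomial in
private theorem nullB {ι : Type} [Fintype ι] (p : MvPolynomial ι ℂ) (hp : p ≠ 0) :
    volume {x : ι → ℂ | eval x p = 0} = 0 := by
  classical
  obtain ⟨e⟩ : Nonempty (Fin (Fintype.card ι) ≃ ι) := ⟨(Fintype.equivFin ι).symm⟩
  have hmp : MeasurePreserving (MeasurableEquiv.piCongrLeft (fun _ : ι => ℂ) e)
      volume volume := volume_measurePreserving_piCongrLeft _ e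
  have hmeas : MeasurableSet {x : ι → ℂ | eval x p = 0} :=
    (MvPolynomial.continuous_eval p).measurable (measurableSet_singleton 0)
  rw [← hmp.measure_preimage hmeas.nullMeasurableSet]
  have hset : (MeasurableEquiv.piCongrLeft (fun _ : ι => ℂ) e) ⁻¹'
      {x : ι → ℂ | eval x p = 0}
      = {y : Fin (Fintype.card ι) → ℂ | eval y (rename e.symm p) = 0} := by
    ext y
    simp only [Set.mem_preimage, Set.mem_setOf_eq, eval_rename]
    have : ∀ i, (MeasurableEquiv.piCongrLeft (fun _ : ι => ℂ) e) y i = y (e.symm i) := by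
      intro i
      rw [MeasurableEquiv.coe_piCongrLeft]
      rw [Equiv.piCongrLeft_apply_eq_cast]; rfl
    rw [show (eval fun i => (MeasurableEquiv.piCongrLeft (fun _ : ι => ℂ) e) y i) p
        = eval (fun i => y (e.symm i)) p by simp_rw [this]]
    rfl
  rw [hset]
  exact nullA _ _ (fun hc => hp (MvPolynomial.rename_injective _ e.symm.injective (by simpa using hc)))

open MeasureTheory MvPolynomial in
private theorem curryMP (β : Type) [Fintype β] :
    ∀ n : ℕ, MeasurePreserving (fun (f : Fin n × β → ℂ) (i : Fin n) (b : β) => f (i, b))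
      volume volume := by
  intro n
  induction n with
  | zero =>
    constructor
    · exact measurable_pi_lambda _ fun i => i.elim0
    · have h1 : (volume : Measure (Fin 0 × β → ℂ)) = Measure.dirac isEmptyElim := by
        exact Measure.pi_of_empty _
      have h2 : (volume : Measure (Fin 0 → β → ℂ)) = Measure.dirac isEmptyElim := by
        exact Measure.pi_of_empty _
      rw [h1, h2, Measure.map_dirac' (measurable_pi_lambda _ fun i : Fin 0 => i.elim0)]
      congr 1
      exact Subsingleton.elim _ _
  | succ n ih =>
    -- the sum equiv
    let e : (β ⊕ (Fin n × β)) ≃ (Fin (n+1) × β) :=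
      { toFun := Sum.elim (fun b => (0, b)) (fun p => (p.1.succ, p.2))
        invFun := fun p => Fin.cases (Sum.inl p.2) (fun j => Sum.inr (j, p.2)) p.1
        left_inv := by rintro (b | ⟨i, b⟩) <;> simp
        right_inv := by
          rintro ⟨i, b⟩
          refine Fin.cases ?_ (fun j => ?_) i <;> simp }
    have h1 : MeasurePreserving
        ((MeasurableEquiv.piCongrLeft (fun _ : Fin (n+1) × β => ℂ) e).symm)
        volume volume := (volume_measurePreserving_piCongrLeft _ e).symm
    have h2 : MeasurePreserving
        (MeasurableEquiv.sumPiEquivProdPi (fun _ : β ⊕ (Fin n × β) => ℂ))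
        volume volume := volume_measurePreserving_sumPiEquivProdPi _
    have h3 : MeasurePreserving
        (Prod.map (id : (β → ℂ) → (β → ℂ))
          (fun (f : Fin n × β → ℂ) (i : Fin n) (b : β) => f (i, b)))
        (volume.prod volume) (volume.prod volume) :=
      (MeasurePreserving.id volume).prod ih
    have h4 : MeasurePreserving
        ((MeasurableEquiv.piFinSuccAbove (fun _ : Fin (n+1) => (β → ℂ)) 0).symm)
        (volume.prod volume) volume :=
      (volume_preserving_piFinSuccAbove (fun _ : Fin (n+1) => (β → ℂ)) 0).symm
    have hcomp := h4.comp (h3.comp (h2.comp h1))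
    have : ((MeasurableEquiv.piFinSuccAbove (fun _ : Fin (n+1) => (β → ℂ)) 0).symm ∘
        (Prod.map (id : (β → ℂ) → (β → ℂ))
          (fun (f : Fin n × β → ℂ) (i : Fin n) (b : β) => f (i, b))) ∘
        (MeasurableEquiv.sumPiEquivProdPi (fun _ : β ⊕ (Fin n × β) => ℂ)) ∘
        ((MeasurableEquiv.piCongrLeft (fun _ : Fin (n+1) × β => ℂ) e).symm))
        = (fun (f : Fin (n+1) × β → ℂ) (i : Fin (n+1)) (b : β) => f (i, b)) := by
      funext f
      ext i b
      induction i using Fin.cases with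
      | zero =>
        simp [MeasurableEquiv.piFinSuccAbove, MeasurableEquiv.sumPiEquivProdPi,
          MeasurableEquiv.piCongrLeft, Equiv.sumPiEquivProdPi, Fin.insertNthEquiv, e]
      | succ j =>
        simp [MeasurableEquiv.piFinSuccAbove, MeasurableEquiv.sumPiEquivProdPi,
          MeasurableEquiv.piCongrLeft, Equiv.sumPiEquivProdPi, Fin.insertNthEquiv, e]
    rwa [this] at hcomp

open MeasureTheory MvPolynomial in
private theorem nullC {β : Type} [Fintype β] (M : ℕ) (p : MvPolynomial (Fin M × β) ℂ) (hp : p ≠ 0) :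
    volume {x : Fin M → β → ℂ | eval (fun v : Fin M × β => x v.1 v.2) p = 0} = 0 := by
  have hcurry : MeasurePreserving
      (fun (f : Fin M × β → ℂ) (i : Fin M) (b : β) => f (i, b)) volume volume := curryMP β M
  have hnullB : volume {x : Fin M × β → ℂ | eval x p = 0} = 0 := nullB p hp
  have hmeas : MeasurableSet {x : Fin M → β → ℂ | eval (fun v : Fin M × β => x v.1 v.2) p = 0} := by
    have hc : Continuous (fun (x : Fin M → β → ℂ) (v : Fin M × β) => x v.1 v.2) :=
      continuous_pi fun v => (continuous_apply v.2).comp (continuous_apply v.1)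
    exact ((MvPolynomial.continuous_eval p).comp hc).measurable (measurableSet_singleton 0)
  rw [← hcurry.measure_preimage hmeas.nullMeasurableSet]
  have : (fun (f : Fin M × β → ℂ) (i : Fin M) (b : β) => f (i, b)) ⁻¹'
      {x : Fin M → β → ℂ | eval (fun v : Fin M × β => x v.1 v.2) p = 0}
      = {x : Fin M × β → ℂ | eval x p = 0} := by
    ext f
    simp only [Set.mem_preimage, Set.mem_setOf_eq]

  rw [this]
  exact hnullB


/-- If for each `m` the `Q×Q` submatrix of `A` formed by columns
`(m-1)Q+1,…,mQ` is invertible, then the set of `X₀ ∈ ℂ^{M×MQ}` (the first `MQ`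
columns of `X`) for which `C_R` is singular has Lebesgue measure zero; in particular,
for almost every `X₀`, `C_R` is invertible and `R(X)` has rank `MQ`. -/
theorem stmt11 (M Q T : ℕ) (hM : 0 < M) (hQ : 0 < Q) (hT : 0 < T) (h : M * Q ≤ T)
    (A : Matrix (Fin Q) (Fin T) ℂ)
    (hA : ∀ m : Fin M,
      IsUnit (Matrix.of fun q q' : Fin Q => A q (emb M Q T h (m, q')))) :
    volume {X₀ : Fin M → (Fin M × Fin Q) → ℂ |
        ¬ IsUnit (Matrix.of fun p p' : Fin M × Fin Q =>
            A p.2 (emb M Q T h p') * X₀ p.1 p')} = 0 ∧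
    ∀ᵐ X₀ : Fin M → (Fin M × Fin Q) → ℂ ∂volume,
      ∀ X : Matrix (Fin M) (Fin T) ℂ,
        (∀ (m : Fin M) (p' : Fin M × Fin Q), X m (emb M Q T h p') = X₀ m p') →
        IsUnit (CR M Q T h A X) ∧ (Rmat M Q T A X).rank = M * Q := by
  classical
  set β := Fin M × Fin Q
  -- the determinant polynomial
  set P : MvPolynomial (Fin M × β) ℂ :=
    (Matrix.of fun p p' : β =>
      (MvPolynomial.C (A p.2 (emb M Q T h p')) : MvPolynomial (Fin M × β) ℂ) * MvPolynomial.X (p.1, p')).det with hP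
  have heval : ∀ x : Fin M × β → ℂ,
      MvPolynomial.eval x P = (Matrix.of fun p p' : β => A p.2 (emb M Q T h p') * x (p.1, p')).det := by
    intro x
    rw [hP, RingHom.map_det]
    congr 1
    ext p p'
    simp [Matrix.map_apply]
  -- P is not the zero polynomial
  have hP0 : P ≠ 0 := by
    intro hc
    set x₀ : Fin M × β → ℂ := fun v => if v.1 = v.2.1 then 1 else 0 with hx₀
    have h1 : MvPolynomial.eval x₀ P = 0 := by rw [hc]; simp
    rw [heval] at h1
    set d : Fin M → Matrix (Fin Q) (Fin Q) ℂ :=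
      fun m => Matrix.of fun q q' => A q (emb M Q T h (m, q')) with hd
    have h2 : (Matrix.of fun p p' : β => A p.2 (emb M Q T h p') * x₀ (p.1, p'))
        = (Matrix.blockDiagonal d).submatrix (Equiv.prodComm (Fin M) (Fin Q))
            (Equiv.prodComm (Fin M) (Fin Q)) := by
      ext ⟨m, q⟩ ⟨m', q'⟩
      simp only [Matrix.of_apply, Matrix.submatrix_apply, Equiv.prodComm_apply,
        Prod.swap_prod_mk, Matrix.blockDiagonal_apply, hx₀]
      by_cases hmm : m = m'
      · subst hmm; simp [hd]
      · simp [hmm, Ne.symm hmm]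
    rw [h2, Matrix.det_submatrix_equiv_self, Matrix.det_blockDiagonal] at h1
    obtain ⟨m, hm⟩ := Finset.prod_eq_zero_iff.mp h1
    have := hA m
    rw [Matrix.isUnit_iff_isUnit_det, isUnit_iff_ne_zero] at this
    exact this hm.2
  -- Part 1
  have part1 : volume {X₀ : Fin M → β → ℂ |
      ¬ IsUnit (Matrix.of fun p p' : β => A p.2 (emb M Q T h p') * X₀ p.1 p')} = 0 := by
    refine measure_mono_null ?_ (nullC M P hP0)
    intro X₀ hX₀
    simp only [Set.mem_setOf_eq] at hX₀ ⊢
    rw [heval]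
    by_contra hdet
    exact hX₀ ((Matrix.isUnit_iff_isUnit_det _).mpr (isUnit_iff_ne_zero.mpr hdet))
  refine ⟨part1, ?_⟩
  -- Part 2
  filter_upwards [(measure_eq_zero_iff_ae_notMem (μ := volume)).mp part1] with X₀ hX₀
  intro X hX
  replace hX₀ : IsUnit (Matrix.of fun p p' : β => A p.2 (emb M Q T h p') * X₀ p.1 p') :=
    not_not.mp hX₀
  have hCReq : CR M Q T h A X
      = Matrix.of fun p p' : β => A p.2 (emb M Q T h p') * X₀ p.1 p' := by
    ext p p'
    simp [CR, Rmat, hX]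
  have hCR : IsUnit (CR M Q T h A X) := hCReq ▸ hX₀
  refine ⟨hCR, le_antisymm ?_ ?_⟩
  · calc (Rmat M Q T A X).rank ≤ Fintype.card β := Matrix.rank_le_card_height _
      _ = M * Q := by simp [β]
  · set E : Matrix (Fin T) β ℂ :=
      Matrix.of fun t p' => if emb M Q T h p' = t then 1 else 0 with hE
    have hfac : CR M Q T h A X = Rmat M Q T A X * E := by
      ext p p'
      simp [CR, Matrix.mul_apply, hE, mul_ite]
    have : (CR M Q T h A X).rank ≤ (Rmat M Q T A X).rank := by
      rw [hfac]; exact Matrix.rank_mul_le_left _ _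
    rwa [Matrix.rank_of_isUnit _ hCR, Fintype.card_prod, Fintype.card_fin, Fintype.card_fin] at this
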